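/- Let p be an odd prime, m ≥ 1, n = 2m, q = p^n. Let t ≡ 2 (mod 4), t not ≡ 0 (mod p^m + 1), s_1 = (t+2)/4, s_2 = (3t+2)/4, d_1 = s_1(p^m-1)+1, d_2 = s_2(p^m-1)+1, and l = gcd(t, p^m+1). For any (a,b) ≠ (0,0) in F_q^2, the number W(a,b) of u in S = {u : u * u^{p^m} = 1} satisfying b^{p^m} u^{3t/2} + a^{p^m} u^{t} + a u^{t/2} + b = 0 lies in the set {0, l/2, l, 3l/2}. -/

import Mathlib

open Polynomial Finset

/-- `p` an odd prime, `q = p^{2m}`, `t ≡ 2 (mod 4)`, `t ≢ 0 (mod p^m+1)`,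
`l = gcd(t, p^m+1)` (so `l` is even).  For `(a,b) ≠ (0,0)` in `F_q²`, the number
`W(a,b)` of `u ∈ S = {u : u·u^{p^m} = 1}` satisfying
`b̄ u^{3t/2} + ā u^t + a u^{t/2} + b = 0` (`x̄ = x^{p^m}`) lies in `{0, l/2, l, 3l/2}`. -/
theorem stmt_19 (p m t : ℕ) [Fact p.Prime] (hp : Odd p) (hm : 0 < m)
    (ht : t % 4 = 2) (ht' : ¬ (p ^ m + 1) ∣ t)
    (a b : GaloisField p (2 * m)) (hab : ¬ (a = 0 ∧ b = 0)) :
    Nat.card {u : GaloisField p (2 * m) // u * u ^ (p ^ m) = 1 ∧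
        b ^ (p ^ m) * u ^ (3 * t / 2) + a ^ (p ^ m) * u ^ t +
          a * u ^ (t / 2) + b = 0} ∈
      ({0, Nat.gcd t (p ^ m + 1) / 2, Nat.gcd t (p ^ m + 1),
        3 * Nat.gcd t (p ^ m + 1) / 2} : Set ℕ) := by
  classical
  haveI : Fintype (GaloisField p (2 * m)) := Fintype.ofFinite _
  have hppos : 2 ≤ p := (Fact.out (p := p.Prime)).two_le
  set N : ℕ := p ^ m + 1 with hNdef
  set s : ℕ := t / 2 with hsdef
  have hts : t = 2 * s := by omega
  have hsodd : s % 2 = 1 := by omega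
  have hNeven : 2 ∣ N := by
    have : Odd (p ^ m) := hp.pow
    obtain ⟨k, hk⟩ := this
    exact ⟨k + 1, by omega⟩
  set g : ℕ := Nat.gcd s N with hgdef
  have hNpos : 0 < N := by positivity
  have hgpos : 0 < g := Nat.gcd_pos_of_pos_right _ hNpos
  have hgs : g ∣ s := Nat.gcd_dvd_left _ _
  have hgN : g ∣ N := Nat.gcd_dvd_right _ _
  -- l = 2 * g
  have hl : Nat.gcd t N = 2 * g := by
    obtain ⟨M, hM⟩ := hNeven
    have h2s : Nat.Coprime 2 s :=
      (Nat.prime_two.coprime_iff_not_dvd).mpr (by omega)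
    have h1 : Nat.gcd t N = 2 * Nat.gcd s M := by
      rw [hts, hM, Nat.gcd_mul_left]
    have h2 : g = Nat.gcd s M := by
      rw [hgdef, hM]
      exact Nat.Coprime.gcd_mul_left_cancel_right M h2s
    rw [h1, h2]
  -- card (GaloisField p (2 * m))
  have hq : Nat.card (GaloisField p (2 * m)) = p ^ (2 * m) := GaloisField.card p (2 * m) (by omega)
  have hqF : Fintype.card (GaloisField p (2 * m)) = p ^ (2 * m) := by
    rw [← Nat.card_eq_fintype_card, hq]
  have hNq : N ∣ Fintype.card (GaloisField p (2 * m)) - 1 := by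
    rw [hqF]
    have hx : 1 ≤ p ^ m := Nat.one_le_pow _ _ (by omega)
    have : p ^ (2 * m) = p ^ m * p ^ m := by rw [two_mul, pow_add]
    refine ⟨p ^ m - 1, ?_⟩
    rw [this, hNdef]
    obtain ⟨y, hy⟩ := Nat.exists_eq_add_of_le hx
    rw [hy]
    have e1 : (1 + y) * (1 + y) = y * y + 2 * y + 1 := by ring
    have e2 : (1 + y + 1) * (1 + y - 1) = y * y + 2 * y := by
      rw [show 1 + y - 1 = y from by omega]; ring
    omega
  have hgq : g ∣ Fintype.card (GaloisField p (2 * m)) - 1 := hgN.trans hNq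
  -- a primitive g-th root of unity, so `nthRootsFinset g (GaloisField p (2 * m))` has `g` elements
  obtain ⟨ζ, hζ⟩ := IsCyclic.exists_generator (α := (GaloisField p (2 * m))ˣ)
  have hordζ : orderOf ζ = Nat.card (GaloisField p (2 * m))ˣ := orderOf_eq_card_of_forall_mem_zpowers hζ
  have hcardu : Nat.card (GaloisField p (2 * m))ˣ = Fintype.card (GaloisField p (2 * m)) - 1 := by
    rw [Nat.card_eq_fintype_card, Fintype.card_units]
  have hprim : IsPrimitiveRoot (ζ : (GaloisField p (2 * m))) (Fintype.card (GaloisField p (2 * m)) - 1) := by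
    rw [← hcardu, ← hordζ]
    exact IsPrimitiveRoot.coe_units_iff.mpr (IsPrimitiveRoot.orderOf ζ)
  have hcardpos : 0 < Fintype.card (GaloisField p (2 * m)) - 1 := by
    rw [hqF]
    have : 2 ≤ p ^ (2 * m) := le_trans hppos (Nat.le_self_pow (by omega) p)
    omega
  have hprimg : IsPrimitiveRoot ((ζ : (GaloisField p (2 * m))) ^ ((Fintype.card (GaloisField p (2 * m)) - 1) / g)) g :=
    hprim.pow hcardpos (Nat.div_mul_cancel hgq).symm
  have hZcard : (nthRootsFinset g (1 : GaloisField p (2 * m))).card = g := hprimg.card_nthRootsFinset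
  -- the cubic polynomial
  set f : (GaloisField p (2 * m))[X] := C (b ^ (p ^ m)) * X ^ 3 + C (a ^ (p ^ m)) * X ^ 2 + C a * X + C b
    with hfdef
  have hcoeff1 : f.coeff 1 = a := by
    rw [hfdef]
    simp only [coeff_add, coeff_C_mul, coeff_X_pow, coeff_X, coeff_C]
    norm_num
  have hcoeff3 : f.coeff 3 = b ^ (p ^ m) := by
    rw [hfdef]
    simp only [coeff_add, coeff_C_mul, coeff_X_pow, coeff_X, coeff_C]
    norm_num
  have hf0 : f ≠ 0 := by
    intro h
    by_cases hA : a = 0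
    · have hb : b ≠ 0 := fun hb => hab ⟨hA, hb⟩
      have : f.coeff 3 = 0 := by rw [h]; simp
      rw [hcoeff3] at this
      exact hb (pow_eq_zero_iff (by positivity) |>.mp this)
    · have : f.coeff 1 = 0 := by rw [h]; simp
      rw [hcoeff1] at this
      exact hA this
  have hfdeg : f.natDegree ≤ 3 := by
    apply Polynomial.natDegree_le_iff_coeff_eq_zero.mpr
    intro i hi
    simp only [hfdef, coeff_add, coeff_C_mul, coeff_X_pow, coeff_C]
    rw [Polynomial.coeff_X]
    have h3 : i ≠ 3 := by omega
    have h2 : i ≠ 2 := by omega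
    have h1 : 1 ≠ i := by omega
    have h0 : i ≠ 0 := by omega
    simp [h3, h2, h1, h0]
  have heval : ∀ v : (GaloisField p (2 * m)), f.eval v = b ^ (p ^ m) * v ^ 3 + a ^ (p ^ m) * v ^ 2 + a * v + b := by
    intro v; simp [hfdef]
  -- the solution set as a Finset
  set T : Finset (GaloisField p (2 * m)) := univ.filter (fun u => u ^ N = 1 ∧ f.eval (u ^ s) = 0) with hTdef
  have hcardT : Nat.card {u : (GaloisField p (2 * m)) // u * u ^ (p ^ m) = 1 ∧
      b ^ (p ^ m) * u ^ (3 * t / 2) + a ^ (p ^ m) * u ^ t + a * u ^ (t / 2) + b = 0}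
      = T.card := by
    rw [Nat.card_eq_fintype_card, Fintype.card_subtype]
    apply Finset.card_bij (fun u _ => u)
    · intro u hu
      simp only [hTdef, mem_filter, mem_univ, true_and] at hu ⊢
      obtain ⟨h1, h2⟩ := hu
      constructor
      · rw [hNdef, pow_succ']; exact h1
      · rw [heval]
        have e3 : (u ^ s) ^ 3 = u ^ (3 * t / 2) := by
          rw [← pow_mul]; congr 1; omega
        have e2 : (u ^ s) ^ 2 = u ^ t := by
          rw [← pow_mul]; congr 1; omega
        rw [e3, e2, hsdef]
        exact h2
    · intro u _ u' _ h; exact h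
    · intro u hu
      refine ⟨u, ?_, rfl⟩
      simp only [hTdef, mem_filter, mem_univ, true_and] at hu ⊢
      obtain ⟨h1, h2⟩ := hu
      constructor
      · rw [hNdef, pow_succ'] at h1; exact h1
      · rw [heval] at h2
        have e3 : (u ^ s) ^ 3 = u ^ (3 * t / 2) := by
          rw [← pow_mul]; congr 1; omega
        have e2 : (u ^ s) ^ 2 = u ^ t := by
          rw [← pow_mul]; congr 1; omega
        rw [e3, e2] at h2
        exact h2
  -- the image of T under the s-th power map
  set V : Finset (GaloisField p (2 * m)) := T.image (fun u => u ^ s) with hVdef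
  have hTsum : T.card = ∑ v ∈ V, (T.filter (fun u => u ^ s = v)).card :=
    Finset.card_eq_sum_card_image (fun u => u ^ s) T
  -- each nonempty fiber has exactly g elements
  have hfiber : ∀ v ∈ V, (T.filter (fun u => u ^ s = v)).card = g := by
    intro v hv
    rw [hVdef, mem_image] at hv
    obtain ⟨u₀, hu₀T, hu₀v⟩ := hv
    rw [hTdef, mem_filter] at hu₀T
    obtain ⟨-, hu₀N, hu₀f⟩ := hu₀T
    have hu₀ne : u₀ ≠ 0 := by
      intro h
      rw [h, zero_pow (by omega : N ≠ 0)] at hu₀N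
      exact zero_ne_one hu₀N
    rw [← hZcard]
    symm
    apply Finset.card_nbij' (i := fun z => u₀ * z) (j := fun u => u₀⁻¹ * u)
    · intro z hz
      rw [Finset.mem_coe, Polynomial.mem_nthRootsFinset hgpos] at hz
      have hzN : z ^ N = 1 := by
        obtain ⟨c, hc⟩ := hgN
        rw [hc, pow_mul, hz, one_pow]
      have hzs : z ^ s = 1 := by
        obtain ⟨c, hc⟩ := hgs
        rw [hc, pow_mul, hz, one_pow]
      simp only [hTdef, Finset.mem_coe, mem_filter, mem_univ, true_and]
      refine ⟨⟨?_, ?_⟩, ?_⟩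
      · rw [mul_pow, hu₀N, hzN, one_mul]
      · rw [mul_pow, hzs, mul_one, hu₀v]
        rw [hu₀v] at hu₀f; exact hu₀f
      · rw [mul_pow, hzs, mul_one, hu₀v]
    · intro u hu
      simp only [hTdef, Finset.mem_coe, mem_filter, mem_univ, true_and] at hu
      obtain ⟨⟨huN, -⟩, hus⟩ := hu
      rw [Finset.mem_coe, Polynomial.mem_nthRootsFinset hgpos]
      have h1 : (u₀⁻¹ * u) ^ N = 1 := by
        rw [mul_pow, inv_pow, hu₀N, huN, inv_one, one_mul]
      have h2 : (u₀⁻¹ * u) ^ s = 1 := by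
        rw [mul_pow, inv_pow, hus, ← hu₀v, inv_mul_cancel₀ (pow_ne_zero _ hu₀ne)]
      have hdvd : orderOf (u₀⁻¹ * u) ∣ g :=
        Nat.dvd_gcd (orderOf_dvd_of_pow_eq_one h2) (orderOf_dvd_of_pow_eq_one h1)
      exact orderOf_dvd_iff_pow_eq_one.mp hdvd
    · intro z _; exact inv_mul_cancel_left₀ hu₀ne z
    · intro u _; exact mul_inv_cancel_left₀ hu₀ne u
  have hTg : T.card = V.card * g := by
    rw [hTsum, Finset.sum_congr rfl hfiber, Finset.sum_const, smul_eq_mul]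
  -- V has at most 3 elements
  have hV3 : V.card ≤ 3 := by
    have hsub : V ⊆ f.roots.toFinset := by
      intro v hv
      rw [hVdef, mem_image] at hv
      obtain ⟨u, huT, huv⟩ := hv
      rw [hTdef, mem_filter] at huT
      rw [Multiset.mem_toFinset, mem_roots hf0]
      rw [← huv]
      exact huT.2.2
    calc V.card ≤ f.roots.toFinset.card := Finset.card_le_card hsub
      _ ≤ Multiset.card f.roots := Multiset.toFinset_card_le _
      _ ≤ f.natDegree := Polynomial.card_roots' f
      _ ≤ 3 := hfdeg
  -- conclude
  rw [hcardT, hTg, hl]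
  simp only [Set.mem_insert_iff, Set.mem_singleton_iff]
  have : V.card = 0 ∨ V.card = 1 ∨ V.card = 2 ∨ V.card = 3 := by omega
  rcases this with h | h | h | h <;> rw [h] <;> omega
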